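/- The generating function identity Σ_{u≥0} Σ_{v≥0} s(u,v) x^u y^v = y/((1−x−y)(1−2y)) holds as formal power series, where s(u,v) = Σ_{i≥0} Σ_{k>i} binomial(u,i)·binomial(v,k). -/

import Mathlib

open MvPowerSeries

open Finset Finsupp in
private lemma gfi_vand (u v : ℕ) :
    ∑ i ∈ range (u+1), u.choose i * v.choose i = (u+v).choose u := by
  rw [Nat.add_choose_eq, Finset.Nat.sum_antidiagonal_eq_sum_range_succ_mk,
    ← Finset.sum_range_reflect]
  apply Finset.sum_congr rfl
  intro j hj
  simp only [Finset.mem_range] at hj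
  have hj' : j ≤ u := by omega
  have h1 : u + 1 - 1 - j = u - j := by omega
  rw [h1, Nat.choose_symm hj']

open Finset in
private def gfi_sn (u v : ℕ) : ℕ :=
  ∑ i ∈ range (u+1), ∑ k ∈ Ico (i+1) (v+1), u.choose i * v.choose k

open Finset in
private lemma gfi_sn_zero (u : ℕ) : gfi_sn u 0 = 0 := by
  unfold gfi_sn
  apply Finset.sum_eq_zero
  intro i _
  rw [Finset.Ico_eq_empty (by omega), Finset.sum_empty]

open Finset in
private lemma gfi_inner_rec (v i : ℕ) : ∑ k ∈ Ico (i+1) (v+1+1), (v+1).choose k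
    = v.choose i + 2 * ∑ k ∈ Ico (i+1) (v+1), v.choose k := by
  rw [Finset.sum_Ico_eq_sum_range]
  have hb : v + 1 + 1 - (i+1) = v + 1 - i := by omega
  rw [hb]
  have e1 : ∀ k ∈ range (v+1-i), (v+1).choose (i+1+k) = v.choose (i+k) + v.choose (i+k+1) := by
    intro k _
    have : i+1+k = (i+k)+1 := by omega
    rw [this, Nat.choose_succ_succ]
  rw [Finset.sum_congr rfl e1, Finset.sum_add_distrib]
  have hA : ∑ k ∈ range (v+1-i), v.choose (i+k)
      = v.choose i + ∑ k ∈ Ico (i+1) (v+1), v.choose k := by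
    rw [Finset.sum_Ico_eq_sum_range]
    have hb2 : v + 1 - (i+1) = v - i := by omega
    rw [hb2]
    rcases le_or_gt i v with h | h
    · have : v + 1 - i = (v - i) + 1 := by omega
      rw [this, Finset.sum_range_succ']
      simp only [add_zero]
      rw [add_comm]
      congr 1
      apply Finset.sum_congr rfl
      intro k _
      congr 1
      omega
    · have h0 : v + 1 - i = 0 := by omega
      have h0' : v - i = 0 := by omega
      rw [h0, h0']
      simp [Nat.choose_eq_zero_of_lt h]
  have hB : ∑ k ∈ range (v+1-i), v.choose (i+k+1)
      = ∑ k ∈ Ico (i+1) (v+1), v.choose k := by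
    rw [Finset.sum_Ico_eq_sum_range]
    have hb2 : v + 1 - (i+1) = v - i := by omega
    rw [hb2]
    rw [← Finset.sum_subset (Finset.range_subset_range.2 (show v - i ≤ v + 1 - i by omega))]
    · apply Finset.sum_congr rfl
      intro k _
      congr 1
      omega
    · intro k hk hk'
      simp only [Finset.mem_range] at hk hk'
      exact Nat.choose_eq_zero_of_lt (by omega)
  rw [hA, hB]
  ring

open Finset in
private lemma gfi_sn_rec (u v : ℕ) :
    gfi_sn u (v+1) = 2 * gfi_sn u v + (u+v).choose u := by
  unfold gfi_sn
  simp only [← Finset.mul_sum]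
  rw [Finset.sum_congr rfl fun i _ => by rw [gfi_inner_rec v i]]
  simp only [Nat.mul_add, Finset.sum_add_distrib]
  rw [gfi_vand, Finset.mul_sum, add_comm]
  congr 1
  apply Finset.sum_congr rfl
  intro i _
  ring

open Finsupp in
private lemma gfi_fit (S : MvPowerSeries (Fin 2) ℚ) (c : ℚ) (n : Fin 2 →₀ ℕ)
    (p q a b a' b' : ℕ) (hn : n = single 0 p + single 1 q)
    (ha : a = p + a') (hb : b = q + b') :
    MvPowerSeries.coeff (single (0:Fin 2) a + single (1:Fin 2) b)
      (MvPowerSeries.monomial n c * S)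
    = c * MvPowerSeries.coeff (single (0:Fin 2) a' + single (1:Fin 2) b') S := by
  subst hn ha hb
  have h : single (0:Fin 2) (p+a') + single (1:Fin 2) (q+b')
      = (single (0:Fin 2) p + single (1:Fin 2) q)
        + (single (0:Fin 2) a' + single (1:Fin 2) b') := by
    rw [single_add, single_add]; abel
  rw [h, MvPowerSeries.coeff_add_monomial_mul]

open Finsupp in
private lemma gfi_nofit (S : MvPowerSeries (Fin 2) ℚ) (c : ℚ) (n : Fin 2 →₀ ℕ)
    (p q a b : ℕ) (hn : n = single 0 p + single 1 q) (h : a < p ∨ b < q) :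
    MvPowerSeries.coeff (single (0:Fin 2) a + single (1:Fin 2) b)
      (MvPowerSeries.monomial n c * S) = 0 := by
  subst hn
  rw [MvPowerSeries.coeff_monomial_mul, if_neg]
  intro hle
  rcases h with h | h
  · have := Finsupp.le_def.mp hle 0
    simp [Finsupp.single_apply] at this
    omega
  · have := Finsupp.le_def.mp hle 1
    simp [Finsupp.single_apply] at this
    omega

open Finsupp in
private lemma gfi_pair_eq (a b a' b' : ℕ)
    (h : (single (0:Fin 2) a + single (1:Fin 2) b : Fin 2 →₀ ℕ)
      = single (0:Fin 2) a' + single (1:Fin 2) b') : a = a' ∧ b = b' := by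
  constructor
  · have := DFunLike.congr_fun h 0
    simpa [Finsupp.single_apply] using this
  · have := DFunLike.congr_fun h 1
    simpa [Finsupp.single_apply] using this

open Finsupp in
private lemma gfi_coeffX1 (a b : ℕ) :
    MvPowerSeries.coeff (single (0:Fin 2) a + single (1:Fin 2) b)
      (MvPowerSeries.X (1:Fin 2) : MvPowerSeries (Fin 2) ℚ)
    = if a = 0 ∧ b = 1 then 1 else 0 := by
  rw [MvPowerSeries.X_def, MvPowerSeries.coeff_monomial]
  have h : ((single (0:Fin 2) a + single (1:Fin 2) b : Fin 2 →₀ ℕ) = single 1 1)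
      ↔ (a = 0 ∧ b = 1) := by
    constructor
    · intro h
      exact gfi_pair_eq a b 0 1 (by rw [h, single_zero, zero_add])
    · rintro ⟨rfl, rfl⟩
      rw [single_zero, zero_add]
  simp [h]

/-- The generating function identity
`∑_{u,v} s(u,v) x^u y^v = y / ((1-x-y)(1-2y))` as formal power series, where
`s(u,v) = ∑_{i ≥ 0} ∑_{k > i} u.choose i * v.choose k`, stated in the form
`(1 - x - y) * (1 - 2y) * S = y`. -/
theorem generating_function_identity (S : MvPowerSeries (Fin 2) ℚ)
    (hS : ∀ u v : ℕ,
      MvPowerSeries.coeff (Finsupp.single (0 : Fin 2) u + Finsupp.single (1 : Fin 2) v) S =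
        ∑ i ∈ Finset.range (u + 1), ∑ k ∈ Finset.Ico (i + 1) (v + 1),
          (u.choose i * v.choose k : ℚ)) :
    (1 - MvPowerSeries.X (0 : Fin 2) - MvPowerSeries.X (1 : Fin 2)) *
        (1 - 2 * MvPowerSeries.X (1 : Fin 2)) * S =
      MvPowerSeries.X (1 : Fin 2) := by
  classical
  have hS' : ∀ u v : ℕ,
      MvPowerSeries.coeff (Finsupp.single (0 : Fin 2) u + Finsupp.single (1 : Fin 2) v) S
        = (gfi_sn u v : ℚ) := by
    intro u v
    rw [hS]
    unfold gfi_sn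
    push_cast
    rfl
  apply MvPowerSeries.ext
  intro m
  obtain ⟨u, v, rfl⟩ : ∃ u v, m = Finsupp.single (0:Fin 2) u + Finsupp.single (1:Fin 2) v :=
    ⟨m 0, m 1, by ext i; fin_cases i <;> simp [Finsupp.single_apply]⟩
  have h2 : (MvPowerSeries.C (σ := Fin 2) (R := ℚ)) 2 = 2 := map_ofNat _ 2
  have h3 : (MvPowerSeries.C (σ := Fin 2) (R := ℚ)) 3 = 3 := map_ofNat _ 3
  have expand : (1 - MvPowerSeries.X (0 : Fin 2) - MvPowerSeries.X (1 : Fin 2)) *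
        (1 - 2 * MvPowerSeries.X (1 : Fin 2)) * S
      = S + MvPowerSeries.C (σ := Fin 2) (R := ℚ) 2 * ((MvPowerSeries.X 0 * MvPowerSeries.X 1) * S)
          + MvPowerSeries.C (σ := Fin 2) (R := ℚ) 2 * ((MvPowerSeries.X 1 * MvPowerSeries.X 1) * S)
          - (MvPowerSeries.X 0 * S)
          - MvPowerSeries.C (σ := Fin 2) (R := ℚ) 3 * (MvPowerSeries.X 1 * S) := by
    rw [h2, h3]; ring
  rw [expand]
  simp only [map_add, map_sub, MvPowerSeries.coeff_C_mul]
  rw [gfi_coeffX1]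
  simp only [MvPowerSeries.X_def, MvPowerSeries.monomial_mul_monomial, one_mul]
  rcases u with _ | a <;> rcases v with _ | _ | b
  · -- u = 0, v = 0
    rw [gfi_nofit S _ _ 1 1 0 0 rfl (by omega),
      gfi_nofit S _ _ 0 2 0 0 (by simp [← Finsupp.single_add]) (by omega),
      gfi_nofit S _ _ 1 0 0 0 (by rw [Finsupp.single_zero, add_zero]) (by omega),
      gfi_nofit S _ _ 0 1 0 0 (by rw [Finsupp.single_zero, zero_add]) (by omega),
      hS']
    norm_num [gfi_sn_zero]
  · -- u = 0, v = 1
    rw [gfi_nofit S _ _ 1 1 0 1 rfl (by omega),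
      gfi_nofit S _ _ 0 2 0 1 (by simp [← Finsupp.single_add]) (by omega),
      gfi_nofit S _ _ 1 0 0 1 (by rw [Finsupp.single_zero, add_zero]) (by omega),
      gfi_fit S _ _ 0 1 0 1 0 0 (by rw [Finsupp.single_zero, zero_add]) (by omega) (by omega),
      hS', hS']
    have r := gfi_sn_rec 0 0
    simp only [gfi_sn_zero] at r ⊢
    norm_num at r ⊢
    norm_num [r]
  · -- u = 0, v = b+2
    rw [gfi_nofit S _ _ 1 1 0 (b+1+1) rfl (by omega),
      gfi_fit S _ _ 0 2 0 (b+1+1) 0 b (by simp [← Finsupp.single_add]) (by omega) (by omega),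
      gfi_nofit S _ _ 1 0 0 (b+1+1) (by rw [Finsupp.single_zero, add_zero]) (by omega),
      gfi_fit S _ _ 0 1 0 (b+1+1) 0 (b+1) (by rw [Finsupp.single_zero, zero_add]) (by omega) (by omega),
      hS', hS', hS']
    have r1 := gfi_sn_rec 0 (b+1)
    have r2 := gfi_sn_rec 0 b
    simp only [Nat.zero_add, Nat.choose_zero_right] at r1 r2
    rw [if_neg (by omega)]
    have r1q : (gfi_sn 0 (b+1+1) : ℚ) = 2 * gfi_sn 0 (b+1) + 1 := by exact_mod_cast r1
    have r2q : (gfi_sn 0 (b+1) : ℚ) = 2 * gfi_sn 0 b + 1 := by exact_mod_cast r2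
    linear_combination r1q - r2q
  · -- u = a+1, v = 0
    rw [gfi_nofit S _ _ 1 1 (a+1) 0 rfl (by omega),
      gfi_nofit S _ _ 0 2 (a+1) 0 (by simp [← Finsupp.single_add]) (by omega),
      gfi_fit S _ _ 1 0 (a+1) 0 a 0 (by rw [Finsupp.single_zero, add_zero]) (by omega) (by omega),
      gfi_nofit S _ _ 0 1 (a+1) 0 (by rw [Finsupp.single_zero, zero_add]) (by omega),
      hS', hS']
    rw [if_neg (by omega)]
    simp [gfi_sn_zero]
  · -- u = a+1, v = 1
    rw [gfi_fit S _ _ 1 1 (a+1) 1 a 0 rfl (by omega) (by omega),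
      gfi_nofit S _ _ 0 2 (a+1) 1 (by simp [← Finsupp.single_add]) (by omega),
      gfi_fit S _ _ 1 0 (a+1) 1 a 1 (by rw [Finsupp.single_zero, add_zero]) (by omega) (by omega),
      gfi_fit S _ _ 0 1 (a+1) 1 (a+1) 0 (by rw [Finsupp.single_zero, zero_add]) (by omega) (by omega),
      hS', hS', hS', hS']
    rw [if_neg (by omega)]
    have ra := gfi_sn_rec (a+1) 0
    have rb := gfi_sn_rec a 0
    simp only [Nat.add_zero, Nat.choose_self, gfi_sn_zero] at ra rb
    norm_num at ra rb
    rw [ra, rb]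
    simp [gfi_sn_zero]
  · -- u = a+1, v = b+2
    rw [gfi_fit S _ _ 1 1 (a+1) (b+1+1) a (b+1) rfl (by omega) (by omega),
      gfi_fit S _ _ 0 2 (a+1) (b+1+1) (a+1) b (by simp [← Finsupp.single_add]) (by omega) (by omega),
      gfi_fit S _ _ 1 0 (a+1) (b+1+1) a (b+1+1) (by rw [Finsupp.single_zero, add_zero]) (by omega) (by omega),
      gfi_fit S _ _ 0 1 (a+1) (b+1+1) (a+1) (b+1) (by rw [Finsupp.single_zero, zero_add]) (by omega) (by omega),
      hS', hS', hS', hS', hS']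
    rw [if_neg (by omega)]
    have r1 := gfi_sn_rec (a+1) (b+1)
    have r2 := gfi_sn_rec a (b+1)
    have r3 := gfi_sn_rec (a+1) b
    have p1 : (a+1+(b+1)).choose (a+1) = (a+b+1).choose a + (a+b+1).choose (a+1) := by
      rw [show a+1+(b+1) = (a+b+1)+1 from by omega]
      exact Nat.choose_succ_succ _ _
    have p2 : a+(b+1) = a+b+1 := by omega
    have p3 : a+1+b = a+b+1 := by omega
    rw [p1] at r1
    rw [p2] at r2
    rw [p3] at r3
    have r1q : (gfi_sn (a+1) (b+1+1) : ℚ)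
        = 2 * gfi_sn (a+1) (b+1) + ((a+b+1).choose a + (a+b+1).choose (a+1)) := by
      exact_mod_cast r1
    have r2q : (gfi_sn a (b+1+1) : ℚ) = 2 * gfi_sn a (b+1) + (a+b+1).choose a := by
      exact_mod_cast r2
    have r3q : (gfi_sn (a+1) (b+1) : ℚ) = 2 * gfi_sn (a+1) b + (a+b+1).choose (a+1) := by
      exact_mod_cast r3
    linear_combination r1q - r2q - r3q
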